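/- Suppose there exist vertices k and m such that k reaches j under u, c m k holds (m competes with k), and i reaches m under u (i.e., the set S⁺_{i,j} of the paper is nonempty). Then Assumption 1 fails for the augmented relation u': there exist vertices x and y with c x y such that y strictly reaches x under u'. Concretely, k strictly reaches m under u' while c m k holds. -/

import Mathlib

/-- If `S⁺_{i,j} ≠ ∅`, i.e. there are `k`, `m` with `k` reaching `j` under
`u`, `c m k`, and `i` reaching `m` under `u`, then adding the edge `(j, i)`
violates Assumption 1: some FL-PT strictly reaches its competitor under the
augmented relation — concretely, `k` strictly reaches `m` while `c m k`. -/
theorem nonempty_Splus_violates_assumption1 {V : Type*}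
    (u c : V → V → Prop) (j i k m : V)
    (hkj : Relation.ReflTransGen u k j)
    (hmk : c m k)
    (him : Relation.ReflTransGen u i m) :
    (∃ x y : V, c x y ∧
        Relation.TransGen (fun a b => u a b ∨ (a = j ∧ b = i)) y x) ∧
      Relation.TransGen (fun a b => u a b ∨ (a = j ∧ b = i)) k m := by
  have key : Relation.TransGen (fun a b => u a b ∨ (a = j ∧ b = i)) k m := by
    have h1 : Relation.ReflTransGen (fun a b => u a b ∨ (a = j ∧ b = i)) k j :=
      Relation.ReflTransGen.mono (fun a b h => Or.inl h) _ _ hkj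
    have h2 : Relation.ReflTransGen (fun a b => u a b ∨ (a = j ∧ b = i)) i m :=
      Relation.ReflTransGen.mono (fun a b h => Or.inl h) _ _ him
    have h3 : Relation.TransGen (fun a b => u a b ∨ (a = j ∧ b = i)) k i :=
      Relation.TransGen.trans_right h1 (Relation.TransGen.single (Or.inr ⟨rfl, rfl⟩))
    exact h3.trans_left h2
  exact ⟨⟨m, k, hmk, key⟩, key⟩
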